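/- Let p be a prime, K a finite extension of ℚ_p, π ∈ K with 0 < |π| < 1, and h(T) = h(T;π) := exp(∑_{k≥0} (πT)^{p^k}/p^k). Let κ be a partition with κ_1 + l(κ) ≤ p. Then |S_κ(h(T))| = |π|^{|κ|}. More precisely, S_κ(h(T)) = (∏_{(i,j) ∈ κ} HL(κ;(i,j)))^{-1} π^{|κ|}, where HL(κ;(i,j)) is the hook length of the cell (i,j) of κ, and each hook length appearing is a p-adic unit. -/

import Mathlib

open scoped Classical

/-- The logarithmic-derivative datum of the Artin–Hasse exponential:
`∑_{k≥0} T^{p^k - 1}`, so that `e^{AH}` is the unique `F` with `F(0) = 1` and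
`F' = (∑_k T^{p^k-1})·F`, i.e. `F = exp (∑_k T^{p^k}/p^k)`. -/
noncomputable def ahLogDeriv (p : ℕ) : PowerSeries ℚ :=
  PowerSeries.mk fun n => if ∃ k : ℕ, n + 1 = p ^ k then (1 : ℚ) else 0

/-- Hook length of the cell `(i, j)` (0-indexed) of the partition `kap` of
length `l`: the cardinality of
`{(i',j') : (i'=i ∧ j ≤ j' < κ_i) ∨ (j'=j ∧ i ≤ i' < l ∧ j < κ_{i'})}`. -/
noncomputable def hookLength (kap : ℕ → ℕ) (l i j : ℕ) : ℕ :=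
  Nat.card {q : ℕ × ℕ //
    (q.1 = i ∧ j ≤ q.2 ∧ q.2 < kap i) ∨ (q.2 = j ∧ i ≤ q.1 ∧ q.1 < l ∧ j < kap q.1)}

/-! ### Auxiliary lemmas -/

set_option linter.unusedSectionVars false

lemma ah_coeff (p : ℕ) (hp : p.Prime) (AH : PowerSeries ℚ)
    (hAH0 : PowerSeries.constantCoeff AH = 1)
    (hAHd : PowerSeries.derivative ℚ AH = ahLogDeriv p * AH) :
    ∀ n : ℕ, n < p → PowerSeries.coeff n AH = 1 / n.factorial := by
  intro n
  induction n with
  | zero => intro _; simpa [PowerSeries.coeff_zero_eq_constantCoeff] using hAH0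
  | succ n ih =>
    intro hn
    have hconv : PowerSeries.coeff n (ahLogDeriv p * AH) = PowerSeries.coeff n AH := by
      rw [PowerSeries.coeff_mul]
      rw [Finset.sum_eq_single (0, n)]
      · simp only [ahLogDeriv, PowerSeries.coeff_mk]
        rw [if_pos ⟨0, by simp⟩, one_mul]
      · rintro ⟨a, b⟩ hab hne
        simp only [Finset.HasAntidiagonal.mem_antidiagonal] at hab
        have ha : a ≠ 0 := by
          rintro rfl; exact hne (by simp; omega)
        simp only [ahLogDeriv, PowerSeries.coeff_mk]
        rw [if_neg, zero_mul]
        rintro ⟨k, hk⟩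
        rcases Nat.eq_zero_or_pos k with rfl | hk0
        · simp at hk; omega
        · have : p ≤ p ^ k := Nat.le_self_pow (by omega) p
          have : a + 1 ≤ n + 1 := by omega
          omega
      · intro hmem
        exact absurd (Finset.HasAntidiagonal.mem_antidiagonal.mpr (by simp)) hmem
    have hder : PowerSeries.coeff (n + 1) AH * (n + 1) = PowerSeries.coeff n AH := by
      rw [← PowerSeries.coeff_derivative, hAHd, hconv]
    have hih := ih (by omega)
    rw [hih] at hder
    have hne : ((n : ℚ) + 1) ≠ 0 := by positivity
    field_simp [Nat.factorial_succ] at hder ⊢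
    push_cast at hder ⊢
    rw [Nat.factorial_succ, Nat.cast_mul]
    push_cast
    linear_combination hder

section Hook
variable (kap : ℕ → ℕ) (l : ℕ)

/-- The length of column `j` of the partition. -/
noncomputable def colLen (j : ℕ) : ℕ := ((Finset.range l).filter (fun r => j < kap r)).card

variable {kap l}
variable (hkanti : ∀ {a b : ℕ}, a ≤ b → kap b ≤ kap a)

include hkanti

lemma colLen_le (j : ℕ) : colLen kap l j ≤ l := by
  simpa [colLen] using (Finset.card_filter_le (Finset.range l) _)

lemma colLen_lb {i j : ℕ} (hi : i < l) (hj : j < kap i) : i + 1 ≤ colLen kap l j := by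
  have hsub : Finset.range (i + 1) ⊆ (Finset.range l).filter (fun r => j < kap r) := by
    intro r hr
    simp only [Finset.mem_range] at hr
    simp only [Finset.mem_filter, Finset.mem_range]
    exact ⟨by omega, lt_of_lt_of_le hj (hkanti (by omega))⟩
  simpa [colLen] using Finset.card_le_card hsub

lemma colLen_ub {i j : ℕ} (hij : kap i ≤ j) : colLen kap l j ≤ i := by
  have hsub : (Finset.range l).filter (fun r => j < kap r) ⊆ Finset.range i := by
    intro r hr
    simp only [Finset.mem_filter, Finset.mem_range] at hr ⊢
    by_contra hri
    exact absurd (lt_of_lt_of_le hr.2 (le_trans (hkanti (by omega)) hij)) (lt_irrefl j)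
  simpa [colLen] using Finset.card_le_card hsub

lemma colLen_anti {j j' : ℕ} (hjj : j ≤ j') : colLen kap l j' ≤ colLen kap l j := by
  refine Finset.card_le_card (fun r hr => ?_)
  simp only [Finset.mem_filter, Finset.mem_range] at hr ⊢
  exact ⟨hr.1, lt_of_le_of_lt hjj hr.2⟩

lemma colLen_split {i j : ℕ} (hi : i < l) (hj : j < kap i) :
    colLen kap l j = i + ((Finset.range l).filter (fun r => i ≤ r ∧ j < kap r)).card := by
  have hset : (Finset.range l).filter (fun r => j < kap r) =
      Finset.range i ∪ (Finset.range l).filter (fun r => i ≤ r ∧ j < kap r) := by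
    ext r
    simp only [Finset.mem_filter, Finset.mem_range, Finset.mem_union]
    constructor
    · rintro ⟨hrl, hkr⟩
      by_cases hri : r < i
      · exact Or.inl hri
      · exact Or.inr ⟨hrl, by omega, hkr⟩
    · rintro (hri | ⟨hrl, _, hkr⟩)
      · exact ⟨by omega, lt_of_lt_of_le hj (hkanti (by omega))⟩
      · exact ⟨hrl, hkr⟩
  rw [colLen, hset, Finset.card_union_of_disjoint, Finset.card_range]
  rw [Finset.disjoint_left]
  intro r hr hr'
  simp only [Finset.mem_range] at hr
  simp only [Finset.mem_filter] at hr'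
  omega

lemma hook_val {i j : ℕ} (hi : i < l) (hj : j < kap i) :
    hookLength kap l i j = (kap i - j) + (colLen kap l j - (i + 1)) := by
  classical
  set A : Finset (ℕ × ℕ) := {i} ×ˢ Finset.Ico j (kap i) with hA
  set B : Finset (ℕ × ℕ) :=
    ((Finset.range l).filter (fun r => i ≤ r ∧ j < kap r)) ×ˢ {j} with hB
  have hset : {q : ℕ × ℕ |
      (q.1 = i ∧ j ≤ q.2 ∧ q.2 < kap i) ∨ (q.2 = j ∧ i ≤ q.1 ∧ q.1 < l ∧ j < kap q.1)} =
      ↑(A ∪ B) := by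
    ext ⟨a, b⟩
    simp only [Set.mem_setOf_eq, Finset.coe_union, Set.mem_union, hA, hB,
      Finset.coe_product, Set.mem_prod, Finset.coe_singleton, Set.mem_singleton_iff,
      Finset.coe_filter, Set.mem_setOf_eq, Finset.coe_Ico, Set.mem_Ico,
      Finset.mem_range]
    tauto
  have hcard : hookLength kap l i j = (A ∪ B).card := by
    have h0 : hookLength kap l i j = Nat.card ({q : ℕ × ℕ |
        (q.1 = i ∧ j ≤ q.2 ∧ q.2 < kap i) ∨ (q.2 = j ∧ i ≤ q.1 ∧ q.1 < l ∧ j < kap q.1)} :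
        Set (ℕ × ℕ)) := rfl
    rw [h0, hset, Nat.card_coe_set_eq, Set.ncard_coe_finset]
  have hInter : A ∩ B = {(i, j)} := by
    ext ⟨a, b⟩
    simp only [Finset.mem_inter, hA, hB, Finset.mem_product, Finset.mem_singleton,
      Finset.mem_Ico, Finset.mem_filter, Finset.mem_range, Prod.mk.injEq]
    constructor
    · rintro ⟨⟨rfl, _, _⟩, _, rfl⟩; exact ⟨rfl, rfl⟩
    · rintro ⟨rfl, rfl⟩; exact ⟨⟨rfl, le_refl _, hj⟩, ⟨hi, le_refl _, hj⟩, rfl⟩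
  have hcardA : A.card = kap i - j := by simp [hA]
  have hcardB : B.card = colLen kap l j - i := by
    rw [hB, Finset.card_product, Finset.card_singleton, mul_one]
    have := colLen_split hkanti hi hj
    omega
  have huni := Finset.card_union_add_card_inter A B
  rw [hInter, Finset.card_singleton, hcardA, hcardB] at huni
  have hlb := colLen_lb hkanti hi hj
  omega

lemma row_identity {i : ℕ} (hi : i < l) :
    Nat.factorial (kap i + (l - 1 - i)) =
      (∏ j ∈ Finset.range (kap i), hookLength kap l i j) *
      (∏ r ∈ Finset.Ioo i l, ((kap i + (l - 1 - i)) - (kap r + (l - 1 - r)))) := by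
  classical
  set x : ℕ → ℕ := fun r => kap r + (l - 1 - r) with hx
  set A : Finset ℕ := (Finset.range (kap i)).image (fun j => hookLength kap l i j) with hA
  set B : Finset ℕ := (Finset.Ioo i l).image (fun r => x i - x r) with hB
  have hstrict : ∀ {a b : ℕ}, a < b → b < kap i →
      hookLength kap l i b < hookLength kap l i a := by
    intro a b hab hb
    rw [hook_val hkanti hi hb, hook_val hkanti hi (by omega)]
    have h1 := colLen_anti (kap := kap) (l := l) hkanti (le_of_lt hab)
    have h2 := colLen_lb hkanti hi hb
    omega
  have hinjA : ∀ a ∈ Finset.range (kap i), ∀ b ∈ Finset.range (kap i),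
      hookLength kap l i a = hookLength kap l i b → a = b := by
    intro a ha b hb hab
    simp only [Finset.mem_range] at ha hb
    by_contra hne
    rcases Nat.lt_or_ge a b with hlt | hge
    · exact absurd hab (Nat.ne_of_gt (hstrict hlt hb))
    · exact absurd hab (Nat.ne_of_lt (hstrict (by omega) ha))
  have hxlt : ∀ {r : ℕ}, i < r → r < l → x r < x i := by
    intro r h1 h2
    have := hkanti (le_of_lt h1)
    simp only [hx]
    omega
  have hinjB : ∀ a ∈ Finset.Ioo i l, ∀ b ∈ Finset.Ioo i l,
      x i - x a = x i - x b → a = b := by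
    intro a ha b hb hab
    simp only [Finset.mem_Ioo] at ha hb
    have h1 := hxlt ha.1 ha.2
    have h2 := hxlt hb.1 hb.2
    by_contra hne
    rcases Nat.lt_or_ge a b with hlt | hge
    · have h3 : x b < x a := by have := hkanti (le_of_lt hlt); simp only [hx]; omega
      omega
    · have h3 : x a < x b := by have := hkanti (a := b) (b := a) (by omega); simp only [hx]; omega
      omega
  have hne : ∀ {j r : ℕ}, j < kap i → i < r → r < l →
      hookLength kap l i j ≠ x i - x r := by
    intro j r hj hir hrl
    rw [hook_val hkanti hi hj]
    have h1 := colLen_lb hkanti hi hj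
    have h2 := colLen_le (kap := kap) (l := l) hkanti j
    have h3 := hkanti (le_of_lt hir)
    by_cases hcase : j < kap r
    · have h4 := colLen_lb hkanti hrl hcase
      simp only [hx]
      omega
    · have h4 := colLen_ub (kap := kap) (l := l) hkanti (i := r) (j := j) (by omega)
      simp only [hx]
      omega
  have hdisj : Disjoint A B := by
    rw [Finset.disjoint_left]
    intro m hmA hmB
    simp only [hA, hB, Finset.mem_image, Finset.mem_range, Finset.mem_Ioo] at hmA hmB
    obtain ⟨j, hj, rfl⟩ := hmA
    obtain ⟨r, ⟨hir, hrl⟩, hr⟩ := hmB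
    exact hne hj hir hrl hr.symm
  have hsub : A ∪ B ⊆ Finset.Ico 1 (x i + 1) := by
    intro m hm
    simp only [Finset.mem_union, hA, hB, Finset.mem_image, Finset.mem_range,
      Finset.mem_Ioo] at hm
    simp only [Finset.mem_Ico]
    rcases hm with ⟨j, hj, rfl⟩ | ⟨r, ⟨hir, hrl⟩, rfl⟩
    · rw [hook_val hkanti hi hj]
      have h1 := colLen_lb hkanti hi hj
      have h2 := colLen_le (kap := kap) (l := l) hkanti j
      simp only [hx]
      omega
    · have := hxlt hir hrl
      omega
  have hcardA : A.card = kap i := by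
    rw [hA, Finset.card_image_of_injOn (fun a ha b hb => hinjA a ha b hb), Finset.card_range]
  have hcardB : B.card = l - 1 - i := by
    rw [hB, Finset.card_image_of_injOn (fun a ha b hb => hinjB a ha b hb), Nat.card_Ioo]
    omega
  have hcardU : (A ∪ B).card = x i := by
    rw [Finset.card_union_of_disjoint hdisj, hcardA, hcardB]
  have heq : A ∪ B = Finset.Ico 1 (x i + 1) := by
    apply Finset.eq_of_subset_of_card_le hsub
    rw [hcardU, Nat.card_Ico]
    omega
  calc Nat.factorial (x i) = ∏ m ∈ Finset.Ico 1 (x i + 1), m :=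
        (Finset.prod_Ico_id_eq_factorial _).symm
    _ = ∏ m ∈ A ∪ B, m := by rw [heq]
    _ = (∏ m ∈ A, m) * (∏ m ∈ B, m) := Finset.prod_union hdisj
    _ = _ := by
        rw [hA, hB, Finset.prod_image hinjA, Finset.prod_image hinjB]

end Hook

lemma prod_Ioi_swap {l : ℕ} (v : Fin l → ℚ) :
    (∏ i : Fin l, ∏ j ∈ Finset.Ioi i, (v (Fin.rev j) - v (Fin.rev i))) =
      ∏ i : Fin l, ∏ j ∈ Finset.Ioi i, (v i - v j) := by
  rw [Finset.prod_sigma', Finset.prod_sigma']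
  refine Finset.prod_nbij' (fun p => ⟨Fin.rev p.2, Fin.rev p.1⟩)
    (fun p => ⟨Fin.rev p.2, Fin.rev p.1⟩) ?_ ?_ ?_ ?_ ?_
  · rintro ⟨a, b⟩ hab
    simp only [Finset.mem_sigma, Finset.mem_univ, Finset.mem_Ioi, true_and] at hab ⊢
    exact Fin.rev_lt_rev.mpr hab
  · rintro ⟨a, b⟩ hab
    simp only [Finset.mem_sigma, Finset.mem_univ, Finset.mem_Ioi, true_and] at hab ⊢
    exact Fin.rev_lt_rev.mpr hab
  · rintro ⟨a, b⟩ _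
    simp [Fin.rev_rev]
  · rintro ⟨a, b⟩ _
    simp [Fin.rev_rev]
  · rintro ⟨a, b⟩ _
    simp [Fin.rev_rev]

lemma det_descFactorial (l : ℕ) (x : ℕ → ℕ) :
    (Matrix.of fun i j : Fin l => ((x i.val).descFactorial (l - 1 - j.val) : ℚ)).det =
      ∏ i : Fin l, ∏ j ∈ Finset.Ioi i, ((x i.val : ℚ) - (x j.val : ℚ)) := by
  set v : Fin l → ℚ := fun i => (x i.val : ℚ) with hv
  set M : Matrix (Fin l) (Fin l) ℚ :=
    Matrix.of fun i j : Fin l =>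
      Polynomial.eval (v (Fin.rev i)) (descPochhammer ℚ (j : ℕ)) with hM
  have hD : (Matrix.of fun i j : Fin l => ((x i.val).descFactorial (l - 1 - j.val) : ℚ)) =
      M.submatrix ⇑Fin.revPerm ⇑Fin.revPerm := by
    ext i j
    simp only [Matrix.of_apply, Matrix.submatrix_apply, hM, Fin.revPerm_apply, Fin.rev_rev]
    have hj : (Fin.rev j).val = l - 1 - j.val := by
      rw [Fin.val_rev]; omega
    rw [hj, descPochhammer_eval_eq_descFactorial]
  rw [hD, Matrix.det_submatrix_equiv_self Fin.revPerm M]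
  have := Matrix.det_eval_matrixOfPolynomials_eq_det_vandermonde
    (fun i : Fin l => v (Fin.rev i)) (fun j => descPochhammer ℚ (j : ℕ))
    (fun j => descPochhammer_natDegree ℚ (j : ℕ)) (fun j => monic_descPochhammer ℚ (j : ℕ))
  rw [hM, ← this, Matrix.det_vandermonde]
  exact prod_Ioi_swap v

theorem schur_artin_hasse_hook_formula
    (p : ℕ) (hp : p.Prime)
    (K : Type*) [NormedField K] [IsUltrametricDist K] [CharZero K]
    (hnorm : ∀ q : ℚ, ‖(q : K)‖ = (padicNorm p q : ℝ))
    (π : K) (hπ0 : 0 < ‖π‖) (hπ : ‖π‖ < 1)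
    (AH : PowerSeries ℚ)
    (hAH0 : PowerSeries.constantCoeff AH = 1)
    (hAHd : PowerSeries.derivative ℚ AH = ahLogDeriv p * AH)
    (h : ℤ → K)
    (hhneg : ∀ i : ℤ, i < 0 → h i = 0)
    (hh : ∀ i : ℕ, h i = ((PowerSeries.coeff i AH : ℚ) : K) * π ^ i)
    (kap : ℕ → ℕ) (hkap : ∀ i, kap (i + 1) ≤ kap i)
    (l : ℕ) (hl : ∀ i, l ≤ i → kap i = 0) (hlen : ∀ i, i < l → 0 < kap i)
    (hsmall : kap 0 + l ≤ p) :
    (∀ i j : ℕ, i < l → j < kap i → ‖(hookLength kap l i j : K)‖ = 1) ∧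
    Matrix.det (Matrix.of fun i j : Fin l => h ((kap i : ℤ) - i + j)) =
        π ^ (∑ i ∈ Finset.range l, kap i) /
          (∏ i ∈ Finset.range l, ∏ j ∈ Finset.range (kap i),
            (hookLength kap l i j : K)) ∧
    ‖Matrix.det (Matrix.of fun i j : Fin l => h ((kap i : ℤ) - i + j))‖ =
        ‖π‖ ^ (∑ i ∈ Finset.range l, kap i) := by
  classical
  haveI : Fact p.Prime := ⟨hp⟩
  have hp2 : 2 ≤ p := hp.two_le
  have hπne : π ≠ 0 := fun h0 => by simp [h0] at hπ0
  have hkanti : ∀ {a b : ℕ}, a ≤ b → kap b ≤ kap a := fun {a b} hab =>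
    antitone_nat_of_succ_le hkap hab
  set x : ℕ → ℕ := fun r => kap r + (l - 1 - r) with hx
  -- Part 1: hook lengths are p-adic units
  have hookbound : ∀ i j : ℕ, i < l → j < kap i →
      0 < hookLength kap l i j ∧ hookLength kap l i j < p := by
    intro i j hi hj
    rw [hook_val hkanti hi hj]
    have h1 := colLen_lb hkanti hi hj
    have h2 := colLen_le (kap := kap) (l := l) hkanti j
    have h3 := hkanti (Nat.zero_le i)
    omega
  have part1 : ∀ i j : ℕ, i < l → j < kap i → ‖(hookLength kap l i j : K)‖ = 1 := by
    intro i j hi hj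
    obtain ⟨h1, h2⟩ := hookbound i j hi hj
    have hcast : ((hookLength kap l i j : ℚ) : K) = (hookLength kap l i j : K) := by
      push_cast; ring
    rw [← hcast, hnorm]
    rw [(padicNorm.nat_eq_one_iff (hookLength kap l i j)).mpr (Nat.not_dvd_of_pos_of_lt h1 h2)]
    norm_num
  refine ⟨part1, ?_⟩
  -- Entrywise description of the matrix
  have hcoeff := ah_coeff p hp AH hAH0 hAHd
  have hA : (Matrix.of fun i j : Fin l => h ((kap i : ℤ) - i + j)) =
      Matrix.of fun i j : Fin l =>
        (π ^ (x i.val) * (((x i.val).factorial : K))⁻¹) *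
        ((π⁻¹) ^ (l - 1 - j.val) * (((x i.val).descFactorial (l - 1 - j.val) : K))) := by
    ext i j
    simp only [Matrix.of_apply]
    by_cases hcase : (i : ℕ) ≤ kap i.val + j.val
    · have hn : ((kap i.val : ℤ) - i.val + j.val) = ((kap i.val + j.val - i.val : ℕ) : ℤ) := by
        push_cast; omega
      rw [hn, hh]
      set n := kap i.val + j.val - i.val with hndef
      have hnp : n < p := by
        have := hkanti (Nat.zero_le i.val)
        have := j.isLt
        omega
      rw [hcoeff n hnp]
      have hjl := j.isLt
      have hil := i.isLt
      have hm : l - 1 - j.val ≤ x i.val := by simp only [hx]; omega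
      have hxn : x i.val - (l - 1 - j.val) = n := by simp only [hx]; omega
      have hfac : ((n.factorial : ℕ) : K) * (((x i.val).descFactorial (l - 1 - j.val) : ℕ) : K)
          = (((x i.val).factorial : ℕ) : K) := by
        rw [← Nat.cast_mul]
        congr 1
        rw [← hxn]
        exact Nat.factorial_mul_descFactorial hm
      have hpow : π ^ (x i.val) * (π⁻¹) ^ (l - 1 - j.val) = π ^ n := by
        rw [inv_pow, ← hxn, pow_sub₀ π hπne hm]
      have hfacne : ((n.factorial : ℕ) : K) ≠ 0 := by
        exact_mod_cast Nat.cast_ne_zero.mpr n.factorial_ne_zero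
      have hfacne' : (((x i.val).factorial : ℕ) : K) ≠ 0 := by
        exact_mod_cast Nat.cast_ne_zero.mpr (x i.val).factorial_ne_zero
      have h2 : ((n.factorial : K))⁻¹ =
          (((x i.val).factorial : K))⁻¹ * ((x i.val).descFactorial (l - 1 - j.val) : K) := by
        push_cast at hfac
        field_simp
        linear_combination -hfac
      push_cast
      rw [one_div, h2, ← hpow]
      ring
    · have hneg : ((kap i.val : ℤ) - i.val + j.val) < 0 := by push_cast; omega
      rw [hhneg _ hneg]
      have hdz : (x i.val).descFactorial (l - 1 - j.val) = 0 := by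
        rw [Nat.descFactorial_eq_zero_iff_lt]
        have := i.isLt
        have := j.isLt
        simp only [hx]
        omega
      rw [hdz]
      simp
  -- determinant computation
  set Dq : Matrix (Fin l) (Fin l) ℚ :=
    Matrix.of fun i j : Fin l => ((x i.val).descFactorial (l - 1 - j.val) : ℚ) with hDq
  set N : ℕ := ∏ i ∈ Finset.range l, ∏ r ∈ Finset.Ioo i l, (x i - x r) with hN
  have hxmono : ∀ {a b : ℕ}, a < b → b < l → x b < x a := by
    intro a b h1 h2; have := hkanti (le_of_lt h1); simp only [hx]; omega
  have hIooIoi : ∀ i : Fin l, (Finset.Ioi i).map Fin.valEmbedding = Finset.Ioo i.val l := by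
    intro i
    rw [Fin.map_valEmbedding_Ioi]
  have hdetDq : Dq.det = (N : ℚ) := by
    rw [hDq, det_descFactorial, hN, Nat.cast_prod]
    rw [← Fin.prod_univ_eq_prod_range
      (fun i => ((∏ r ∈ Finset.Ioo i l, (x i - x r) : ℕ) : ℚ)) l]
    apply Finset.prod_congr rfl
    intro i _
    rw [Nat.cast_prod, ← hIooIoi i, Finset.prod_map]
    apply Finset.prod_congr rfl
    intro j hj
    simp only [Fin.valEmbedding_apply]
    rw [Nat.cast_sub (le_of_lt (hxmono (Fin.lt_def.mp (Finset.mem_Ioi.mp hj)) j.isLt))]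
  have hdetDqK :
      (Matrix.of fun i j : Fin l => (((x i.val).descFactorial (l - 1 - j.val)) : K)).det
        = (N : K) := by
    have hmap : (Matrix.of fun i j : Fin l => (((x i.val).descFactorial (l - 1 - j.val)) : K))
        = Dq.map (Rat.castHom K) := by
      ext i j
      simp [hDq]
    rw [hmap, show Dq.map (Rat.castHom K) = (Rat.castHom K).mapMatrix Dq from rfl,
      ← RingHom.map_det, hdetDq]
    simp
  have hdet : (Matrix.of fun i j : Fin l => h ((kap i : ℤ) - i + j)).det =
      (∏ i : Fin l, (π ^ (x i.val) * (((x i.val).factorial : K))⁻¹)) *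
      ((∏ j : Fin l, (π⁻¹) ^ (l - 1 - j.val)) * (N : K)) := by
    rw [hA, ← hdetDqK]
    rw [show (Matrix.of fun i j : Fin l =>
        (π ^ (x i.val) * (((x i.val).factorial : K))⁻¹) *
        ((π⁻¹) ^ (l - 1 - j.val) * (((x i.val).descFactorial (l - 1 - j.val) : K)))) =
      Matrix.of (fun i j : Fin l =>
        (fun k : Fin l => π ^ (x k.val) * (((x k.val).factorial : K))⁻¹) i *
        (Matrix.of fun i' j' : Fin l =>
          (π⁻¹) ^ (l - 1 - j'.val) * (((x i'.val).descFactorial (l - 1 - j'.val) : K))) i j)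
      from rfl]
    rw [Matrix.det_mul_column]
    congr 1
    rw [show (Matrix.of fun i' j' : Fin l =>
        (π⁻¹) ^ (l - 1 - j'.val) * (((x i'.val).descFactorial (l - 1 - j'.val) : K))) =
      Matrix.of (fun i j : Fin l =>
        (fun k : Fin l => (π⁻¹) ^ (l - 1 - k.val)) j *
        (Matrix.of fun i' j' : Fin l =>
          (((x i'.val).descFactorial (l - 1 - j'.val) : K))) i j) from rfl]
    rw [Matrix.det_mul_row]
  have hprodrow : (∏ i : Fin l, (π ^ (x i.val) * (((x i.val).factorial : K))⁻¹))
      = π ^ (∑ i ∈ Finset.range l, x i) *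
        (∏ i ∈ Finset.range l, ((x i).factorial : K))⁻¹ := by
    rw [Finset.prod_mul_distrib, Finset.prod_inv_distrib]
    congr 1
    · rw [Fin.prod_univ_eq_prod_range (fun i => π ^ (x i)) l,
        Finset.prod_pow_eq_pow_sum]
    · rw [Fin.prod_univ_eq_prod_range (fun i => ((x i).factorial : K)) l]
  have hprodcol : (∏ j : Fin l, (π⁻¹) ^ (l - 1 - j.val))
      = (π ^ (∑ i ∈ Finset.range l, (l - 1 - i)))⁻¹ := by
    rw [Fin.prod_univ_eq_prod_range (fun j => (π⁻¹) ^ (l - 1 - j)) l,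
      Finset.prod_pow_eq_pow_sum, inv_pow]
  have hsumx : ∑ i ∈ Finset.range l, x i =
      (∑ i ∈ Finset.range l, kap i) + ∑ i ∈ Finset.range l, (l - 1 - i) := by
    rw [← Finset.sum_add_distrib]
  have hfacprod : (∏ i ∈ Finset.range l, (x i).factorial) =
      (∏ i ∈ Finset.range l, ∏ j ∈ Finset.range (kap i), hookLength kap l i j) * N := by
    rw [hN, ← Finset.prod_mul_distrib]
    apply Finset.prod_congr rfl
    intro i hi
    exact row_identity hkanti (Finset.mem_range.mp hi)
  have hNpos : 0 < N := by
    rw [hN]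
    apply Finset.prod_pos
    intro i hi
    apply Finset.prod_pos
    intro r hr
    simp only [Finset.mem_range] at hi
    simp only [Finset.mem_Ioo] at hr
    have := hxmono hr.1 hr.2
    omega
  have hHpodPos : 0 < ∏ i ∈ Finset.range l, ∏ j ∈ Finset.range (kap i), hookLength kap l i j := by
    apply Finset.prod_pos
    intro i hi
    apply Finset.prod_pos
    intro j hj
    exact (hookbound i j (Finset.mem_range.mp hi) (Finset.mem_range.mp hj)).1
  have hcastfac : (∏ i ∈ Finset.range l, ((x i).factorial : K)) =
      (∏ i ∈ Finset.range l, ∏ j ∈ Finset.range (kap i), (hookLength kap l i j : K)) *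
        (N : K) := by
    have := congrArg (fun m : ℕ => (m : K)) hfacprod
    push_cast at this
    exact this
  have hNne : (N : K) ≠ 0 := Nat.cast_ne_zero.mpr hNpos.ne'
  have hHne : (∏ i ∈ Finset.range l, ∏ j ∈ Finset.range (kap i),
      (hookLength kap l i j : K)) ≠ 0 := by
    have : ((∏ i ∈ Finset.range l, ∏ j ∈ Finset.range (kap i),
        hookLength kap l i j : ℕ) : K) ≠ 0 := Nat.cast_ne_zero.mpr hHpodPos.ne'
    push_cast at this
    exact this
  have hpine : (π ^ (∑ i ∈ Finset.range l, (l - 1 - i))) ≠ 0 := pow_ne_zero _ hπne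
  have hdetval : (Matrix.of fun i j : Fin l => h ((kap i : ℤ) - i + j)).det =
      π ^ (∑ i ∈ Finset.range l, kap i) /
        (∏ i ∈ Finset.range l, ∏ j ∈ Finset.range (kap i), (hookLength kap l i j : K)) := by
    rw [hdet, hprodrow, hprodcol, hsumx, pow_add, hcastfac]
    field_simp
  refine ⟨hdetval, ?_⟩
  rw [hdetval, norm_div, norm_pow]
  have hnorm1 : ‖∏ i ∈ Finset.range l, ∏ j ∈ Finset.range (kap i),
      (hookLength kap l i j : K)‖ = 1 := by
    rw [norm_prod]
    apply Finset.prod_eq_one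
    intro i hi
    rw [norm_prod]
    apply Finset.prod_eq_one
    intro j hj
    exact part1 i j (Finset.mem_range.mp hi) (Finset.mem_range.mp hj)
  rw [hnorm1, div_one]
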